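/- Let X ⊆ Y be infinite sets and l = (Fm_Σ(X), ⊢) a logic of regular cardinality κ. Then the set NatExt_Y(l) of natural extensions of l to Fm_Σ(Y), partially ordered by deductive strength (⊢₁ ≤ ⊢₂ iff Γ ⊢₁ φ implies Γ ⊢₂ φ for all Γ, φ), is a complete lattice: every subset S ⊆ NatExt_Y(l) has a least upper bound and a greatest lower bound within NatExt_Y(l). -/

import Mathlib

universe u v w

open FirstOrder FirstOrder.Language

/-- A relation between subsets and elements of `A` is `μ`-ary. -/
def KAry {A : Type*} (μ : Cardinal) (r : Set A → A → Prop) : Prop :=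
  ∀ (Γ : Set A) (φ : A), r Γ φ → ∃ Γ' ⊆ Γ, Cardinal.mk ↥Γ' < μ ∧ r Γ' φ

/-- `r` is a logic on `Fm_Σ(W)`: reflexive, monotone, satisfying cut, structural. -/
def IsLogicOn {L : FirstOrder.Language} {W : Type*}
    (r : Set (L.Term W) → L.Term W → Prop) : Prop :=
  (∀ (Γ : Set (L.Term W)) (φ : L.Term W), φ ∈ Γ → r Γ φ) ∧
  (∀ (Γ Δ : Set (L.Term W)) (φ : L.Term W), Γ ⊆ Δ → r Γ φ → r Δ φ) ∧
  (∀ (Γ Δ : Set (L.Term W)) (φ : L.Term W), r Γ φ → (∀ ψ ∈ Γ, r Δ ψ) → r Δ φ) ∧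
  (∀ (σ : W → L.Term W) (Γ : Set (L.Term W)) (φ : L.Term W),
      r Γ φ → r ((fun t : L.Term W => t.subst σ) '' Γ) (φ.subst σ))

/-- `r'` is a natural extension of `r` to `Fm_Σ(Y)` (via the inclusion `em`):
a logic on `Fm_Σ(Y)` which is a conservative extension of `r` and has the same
cardinality as `r`. -/
def IsNatExt {L : FirstOrder.Language.{u, v}} {X Y : Type w} (em : X → Y)
    (r : Set (L.Term X) → L.Term X → Prop)
    (r' : Set (L.Term Y) → L.Term Y → Prop) : Prop :=
  IsLogicOn r' ∧
  (∀ (Γ : Set (L.Term X)) (φ : L.Term X),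
      r Γ φ ↔ r' (Term.relabel em '' Γ) (Term.relabel em φ)) ∧
  (∀ μ : Cardinal.{max u w}, Cardinal.aleph0 ≤ μ → (KAry μ r ↔ KAry μ r'))

/-- Deductive strength order on relations. -/
def RelLe {A : Type*} (r₁ r₂ : Set A → A → Prop) : Prop :=
  ∀ (Γ : Set A) (φ : A), r₁ Γ φ → r₂ Γ φ


namespace StmtAux

variable {L : FirstOrder.Language.{u, v}}

theorem subst_relabel' {α β γ : Type*} (g : α → β) (σ : β → L.Term γ) (t : L.Term α) :
    (t.relabel g).subst σ = t.subst (σ ∘ g) := by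
  induction t with
  | var => rfl
  | func f ts ih => simp [ih]

theorem relabel_subst' {α β γ : Type*} (σ : α → L.Term β) (g : β → γ) (t : L.Term α) :
    (t.subst σ).relabel g = t.subst (fun a => (σ a).relabel g) := by
  induction t with
  | var => rfl
  | func f ts ih => simp [ih]

theorem subst_subst' {α β γ : Type*} (σ : α → L.Term β) (τ : β → L.Term γ) (t : L.Term α) :
    (t.subst σ).subst τ = t.subst (fun a => (σ a).subst τ) := by
  induction t with
  | var => rfl
  | func f ts ih => simp [ih]

theorem subst_var' {α : Type*} (t : L.Term α) : t.subst Term.var = t := by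
  induction t with
  | var => rfl
  | func f ts ih => simp [ih]



end StmtAux

namespace StmtAux

section Main

variable {L : FirstOrder.Language.{u, v}} {X Y : Type w}

/-- κ-ary companion of a relation. -/
def companion (κ : Cardinal.{max u w}) (r' : Set (L.Term Y) → L.Term Y → Prop) :
    Set (L.Term Y) → L.Term Y → Prop :=
  fun Γ φ => ∃ Γ' ⊆ Γ, Cardinal.mk ↥Γ' < κ ∧ r' Γ' φ

/-- The strongest conservative extension candidate. -/
def rmax (em : X → Y) (r : Set (L.Term X) → L.Term X → Prop) :
    Set (L.Term Y) → L.Term Y → Prop :=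
  fun Γ φ => ∀ σ : Y → L.Term X, r ((fun t : L.Term Y => t.subst σ) '' Γ) (φ.subst σ)

variable {κ : Cardinal.{max u w}}

theorem companion_logic (hκ : κ.IsRegular) {r' : Set (L.Term Y) → L.Term Y → Prop}
    (h : IsLogicOn r') : IsLogicOn (companion κ r') := by
  obtain ⟨hrefl, hmono, hcut, hstr⟩ := h
  refine ⟨?_, ?_, ?_, ?_⟩
  · intro Γ φ hφ
    exact ⟨{φ}, Set.singleton_subset_iff.2 hφ,
      by rw [Cardinal.mk_singleton]; exact Cardinal.one_lt_aleph0.trans_le hκ.aleph0_le,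
      hrefl _ _ rfl⟩
  · rintro Γ Δ φ hΓΔ ⟨Γ', h1, h2, h3⟩
    exact ⟨Γ', h1.trans hΓΔ, h2, h3⟩
  · rintro Γ Δ φ ⟨Γ', hΓ'Γ, hcard, hΓ'φ⟩ hall
    choose f hf1 hf2 hf3 using fun ψ (hψ : ψ ∈ Γ') => hall ψ (hΓ'Γ hψ)
    refine ⟨⋃ ψ : Γ', f ψ.1 ψ.2, Set.iUnion_subset (fun ψ => hf1 ψ.1 ψ.2), ?_, ?_⟩
    · exact Cardinal.mk_iUnion_le_sum_mk.trans_lt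
        (Cardinal.sum_lt_of_isRegular hκ hcard (fun ψ => hf2 ψ.1 ψ.2))
    · refine hcut Γ' _ φ hΓ'φ (fun ψ hψ => hmono _ _ ψ ?_ (hf3 ψ hψ))
      exact Set.subset_iUnion (fun ψ : Γ' => f ψ.1 ψ.2) ⟨ψ, hψ⟩
  · rintro σ Γ φ ⟨Γ', h1, h2, h3⟩
    exact ⟨_, Set.image_mono h1, Cardinal.mk_image_le.trans_lt h2, hstr σ Γ' φ h3⟩

theorem companion_kary {r' : Set (L.Term Y) → L.Term Y → Prop} :
    KAry κ (companion κ r') := by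
  rintro Γ φ ⟨Γ', h1, h2, h3⟩
  exact ⟨Γ', h1, h2, Γ', subset_rfl, h2, h3⟩

theorem companion_le {r' : Set (L.Term Y) → L.Term Y → Prop}
    (hmono : ∀ (Γ Δ : Set (L.Term Y)) (φ : L.Term Y), Γ ⊆ Δ → r' Γ φ → r' Δ φ) :
    RelLe (companion κ r') r' := by
  rintro Γ φ ⟨Γ', h1, _, h3⟩
  exact hmono Γ' Γ φ h1 h3

theorem le_companion {r' : Set (L.Term Y) → L.Term Y → Prop} (h : KAry κ r') :
    RelLe r' (companion κ r') :=
  fun Γ φ hφ => h Γ φ hφ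

theorem companion_mono {r₁ r₂ : Set (L.Term Y) → L.Term Y → Prop} (h : RelLe r₁ r₂) :
    RelLe (companion κ r₁) (companion κ r₂) := by
  rintro Γ φ ⟨Γ', h1, h2, h3⟩
  exact ⟨Γ', h1, h2, h _ _ h3⟩

variable [Infinite X] {em : X → Y}

theorem relabel_retract (hem : Function.Injective em) (t : L.Term X) :
    (Term.relabel em t).subst (Term.var ∘ Function.invFun em) = t := by
  rw [subst_relabel']
  have hc : ((Term.var ∘ Function.invFun em) ∘ em : X → L.Term X) = Term.var :=
    funext fun x => congrArg Term.var (Function.leftInverse_invFun hem x)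
  rw [hc, subst_var']

theorem relabel_inj (hem : Function.Injective em) :
    Function.Injective (Term.relabel em : L.Term X → L.Term Y) :=
  Function.LeftInverse.injective
    (g := fun t : L.Term Y => t.subst (Term.var ∘ Function.invFun em))
    (relabel_retract hem)

variable {r : Set (L.Term X) → L.Term X → Prop}

/-- Under the hypotheses of the theorem, being a natural extension follows from:
logic + conservative + κ-ary. -/
theorem natext_of (hem : Function.Injective em) (hκ : κ.IsRegular)
    (hκary : KAry κ r)
    (hleast : ∀ μ : Cardinal.{max u w}, Cardinal.aleph0 ≤ μ → KAry μ r → κ ≤ μ)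
    {r' : Set (L.Term Y) → L.Term Y → Prop} (hlog' : IsLogicOn r')
    (hcons : ∀ (Γ : Set (L.Term X)) (φ : L.Term X),
      r Γ φ ↔ r' (Term.relabel em '' Γ) (Term.relabel em φ))
    (hk' : KAry κ r') : IsNatExt em r r' := by
  refine ⟨hlog', hcons, fun μ hμ => ⟨fun h => ?_, fun h => ?_⟩⟩
  · have hκμ := hleast μ hμ h
    intro Γ φ hΓφ
    obtain ⟨Γ', h1, h2, h3⟩ := hk' Γ φ hΓφ
    exact ⟨Γ', h1, h2.trans_le hκμ, h3⟩
  · intro Γ φ hΓφ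
    obtain ⟨Γ'', h1, h2, h3⟩ := h _ _ ((hcons Γ φ).1 hΓφ)
    have himg : Term.relabel em '' (Term.relabel em ⁻¹' Γ'' ∩ Γ) = Γ'' := by
      apply Set.Subset.antisymm
      · rintro ψ ⟨t, ⟨htp, _⟩, rfl⟩; exact htp
      · intro ψ hψ
        obtain ⟨t, htΓ, rfl⟩ := h1 hψ
        exact ⟨t, ⟨hψ, htΓ⟩, rfl⟩
    refine ⟨Term.relabel em ⁻¹' Γ'' ∩ Γ, Set.inter_subset_right, ?_, ?_⟩
    · have hle : Cardinal.mk ↥(Term.relabel em ⁻¹' Γ'' ∩ Γ) ≤ Cardinal.mk ↥Γ'' := by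
        refine Cardinal.mk_le_of_injective
          (f := fun x : ↥(Term.relabel em ⁻¹' Γ'' ∩ Γ) =>
            (⟨Term.relabel em x.1, x.2.1⟩ : ↥Γ'')) ?_
        intro a b hab
        exact Subtype.ext (relabel_inj hem (congrArg Subtype.val hab))
      exact hle.trans_lt h2
    · exact (hcons _ φ).2 (by rw [himg]; exact h3)

theorem rmax_logic (hlogic : IsLogicOn r) : IsLogicOn (rmax em r) := by
  obtain ⟨hrefl, hmono, hcut, hstr⟩ := hlogic
  refine ⟨?_, ?_, ?_, ?_⟩
  · intro Γ φ hφ σ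
    exact hrefl _ _ (Set.mem_image_of_mem _ hφ)
  · intro Γ Δ φ hΓΔ h σ
    exact hmono _ _ _ (Set.image_mono hΓΔ) (h σ)
  · intro Γ Δ φ h hall σ
    refine hcut _ _ _ (h σ) ?_
    rintro χ ⟨ψ, hψ, rfl⟩
    exact hall ψ hψ σ
  · intro τ Γ φ h σ
    have h2 := h (fun y => (τ y).subst σ)
    have himg : (fun t : L.Term Y => t.subst σ) '' ((fun t : L.Term Y => t.subst τ) '' Γ)
        = (fun t : L.Term Y => t.subst (fun y => (τ y).subst σ)) '' Γ := by
      rw [← Set.image_comp]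
      exact Set.image_congr fun t _ => subst_subst' τ σ t
    rw [himg, subst_subst' τ σ φ]
    exact h2

theorem rmax_cons (hem : Function.Injective em) (hlogic : IsLogicOn r) :
    ∀ (Γ : Set (L.Term X)) (φ : L.Term X),
      r Γ φ ↔ rmax em r (Term.relabel em '' Γ) (Term.relabel em φ) := by
  intro Γ φ
  constructor
  · intro h σ
    have hstr := hlogic.2.2.2 (σ ∘ em) Γ φ h
    have himg : (fun t : L.Term Y => t.subst σ) '' (Term.relabel em '' Γ)
        = (fun t : L.Term X => t.subst (σ ∘ em)) '' Γ := by
      rw [← Set.image_comp]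
      exact Set.image_congr fun t _ => subst_relabel' em σ t
    rw [himg, subst_relabel' em σ φ]
    exact hstr
  · intro h
    have h2 := h (Term.var ∘ Function.invFun em)
    have himg : (fun t : L.Term Y => t.subst (Term.var ∘ Function.invFun em))
        '' (Term.relabel em '' Γ) = Γ := by
      apply Set.Subset.antisymm
      · rintro ψ ⟨t', ⟨t, ht, rfl⟩, rfl⟩
        show (Term.relabel em t).subst (Term.var ∘ Function.invFun em) ∈ Γ
        rw [relabel_retract hem t]; exact ht
      · intro t ht
        exact ⟨Term.relabel em t, Set.mem_image_of_mem _ ht, relabel_retract hem t⟩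
    rw [himg, relabel_retract hem φ] at h2
    exact h2

theorem le_rmax (hem : Function.Injective em)
    {r' : Set (L.Term Y) → L.Term Y → Prop} (hlog' : IsLogicOn r')
    (hcons' : ∀ (Γ : Set (L.Term X)) (φ : L.Term X),
      r Γ φ ↔ r' (Term.relabel em '' Γ) (Term.relabel em φ)) :
    RelLe r' (rmax em r) := by
  intro Γ φ h σ
  have hstr := hlog'.2.2.2 (fun y => (σ y).relabel em) Γ φ h
  apply (hcons' _ _).2
  have himg : Term.relabel em '' ((fun t : L.Term Y => t.subst σ) '' Γ)
      = (fun t : L.Term Y => t.subst (fun y => (σ y).relabel em)) '' Γ := by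
    rw [← Set.image_comp]
    exact Set.image_congr fun t _ => relabel_subst' σ em t
  rw [himg, relabel_subst' σ em φ]
  exact hstr

theorem companion_cons (hκary : KAry κ r)
    {r' : Set (L.Term Y) → L.Term Y → Prop}
    (hmono : ∀ (Γ Δ : Set (L.Term Y)) (φ : L.Term Y), Γ ⊆ Δ → r' Γ φ → r' Δ φ)
    (hcons : ∀ (Γ : Set (L.Term X)) (φ : L.Term X),
      r Γ φ ↔ r' (Term.relabel em '' Γ) (Term.relabel em φ)) :
    ∀ (Γ : Set (L.Term X)) (φ : L.Term X),
      r Γ φ ↔ companion κ r' (Term.relabel em '' Γ) (Term.relabel em φ) := by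
  intro Γ φ
  constructor
  · intro h
    obtain ⟨Γ₀, h1, h2, h3⟩ := hκary Γ φ h
    exact ⟨Term.relabel em '' Γ₀, Set.image_mono h1,
      Cardinal.mk_image_le.trans_lt h2, (hcons Γ₀ φ).1 h3⟩
  · rintro ⟨Γ', hs, _, hp⟩
    exact (hcons Γ φ).2 (hmono _ _ _ hs hp)

end Main

end StmtAux


namespace StmtAux

theorem glb_aux {L : FirstOrder.Language.{u, v}} {X Y : Type w} [Infinite X]
    {em : X → Y} (hem : Function.Injective em)
    {κ : Cardinal.{max u w}} (hκ : κ.IsRegular)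
    {r : Set (L.Term X) → L.Term X → Prop} (hlogic : IsLogicOn r)
    (hκary : KAry κ r)
    (hleast : ∀ μ : Cardinal.{max u w}, Cardinal.aleph0 ≤ μ → KAry μ r → κ ≤ μ)
    (S : Set (Set (L.Term Y) → L.Term Y → Prop))
    (hS : ∀ r' ∈ S, IsNatExt em r r') :
    ∃ ri, IsNatExt em r ri ∧ (∀ r' ∈ S, RelLe ri r') ∧
      ∀ rt, IsNatExt em r rt → (∀ r' ∈ S, RelLe rt r') → RelLe rt ri := by
  classical
  set rcap : Set (L.Term Y) → L.Term Y → Prop :=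
    fun Γ φ => rmax em r Γ φ ∧ ∀ r' ∈ S, r' Γ φ with hrcap
  have hrmaxlog := rmax_logic (em := em) hlogic
  have hcaplog : IsLogicOn rcap := by
    refine ⟨?_, ?_, ?_, ?_⟩
    · intro Γ φ hφ
      exact ⟨hrmaxlog.1 Γ φ hφ, fun r' hr' => (hS r' hr').1.1 Γ φ hφ⟩
    · rintro Γ Δ φ hsub ⟨h1, h2⟩
      exact ⟨hrmaxlog.2.1 Γ Δ φ hsub h1,
        fun r' hr' => (hS r' hr').1.2.1 Γ Δ φ hsub (h2 r' hr')⟩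
    · rintro Γ Δ φ ⟨h1, h2⟩ hall
      exact ⟨hrmaxlog.2.2.1 Γ Δ φ h1 (fun ψ hψ => (hall ψ hψ).1),
        fun r' hr' => (hS r' hr').1.2.2.1 Γ Δ φ (h2 r' hr')
          (fun ψ hψ => (hall ψ hψ).2 r' hr')⟩
    · rintro σ Γ φ ⟨h1, h2⟩
      exact ⟨hrmaxlog.2.2.2 σ Γ φ h1,
        fun r' hr' => (hS r' hr').1.2.2.2 σ Γ φ (h2 r' hr')⟩
  have hcapcons : ∀ (Γ : Set (L.Term X)) (φ : L.Term X),
      r Γ φ ↔ rcap (Term.relabel em '' Γ) (Term.relabel em φ) := by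
    intro Γ φ
    constructor
    · intro h
      exact ⟨(rmax_cons hem hlogic Γ φ).1 h,
        fun r' hr' => ((hS r' hr').2.1 Γ φ).1 h⟩
    · rintro ⟨h1, _⟩
      exact (rmax_cons hem hlogic Γ φ).2 h1
  refine ⟨companion κ rcap,
    natext_of hem hκ hκary hleast (companion_logic hκ hcaplog)
      (companion_cons hκary hcaplog.2.1 hcapcons) companion_kary, ?_, ?_⟩
  · intro r' hr' Γ φ h
    exact (companion_le hcaplog.2.1 Γ φ h).2 r' hr'
  · intro rt hrt hbelow Γ φ h
    have hkt : KAry κ rt := (hrt.2.2 κ hκ.aleph0_le).1 hκary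
    obtain ⟨Γ', h1, h2, h3⟩ := hkt Γ φ h
    exact ⟨Γ', h1, h2, le_rmax hem hrt.1 hrt.2.1 Γ' φ h3,
      fun r' hr' => hbelow r' hr' Γ' φ h3⟩

end StmtAux

/-- Corollary `natextlattice`: for a logic `l` of regular cardinality
κ, the set of natural extensions of `l` to `Fm_Σ(Y)`, ordered by deductive strength,
is a complete lattice: every subset has a least upper bound and a greatest lower
bound within the set of natural extensions. -/
theorem stmt_19 {L : FirstOrder.Language.{u, v}} {X Y : Type w}
    [Infinite X] [Infinite Y]
    (em : X → Y) (hem : Function.Injective em)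
    (κ : Cardinal.{max u w}) (hκ : κ.IsRegular)
    (r : Set (L.Term X) → L.Term X → Prop) (hlogic : IsLogicOn r)
    (hκary : KAry κ r)
    (hleast : ∀ μ : Cardinal.{max u w}, Cardinal.aleph0 ≤ μ → KAry μ r → κ ≤ μ) :
    ∀ S : Set (Set (L.Term Y) → L.Term Y → Prop),
      (∀ r' ∈ S, IsNatExt em r r') →
      -- least upper bound
      (∃ rs, IsNatExt em r rs ∧ (∀ r' ∈ S, RelLe r' rs) ∧
          ∀ rt, IsNatExt em r rt → (∀ r' ∈ S, RelLe r' rt) → RelLe rs rt) ∧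
      -- greatest lower bound
      (∃ ri, IsNatExt em r ri ∧ (∀ r' ∈ S, RelLe ri r') ∧
          ∀ rt, IsNatExt em r rt → (∀ r' ∈ S, RelLe rt r') → RelLe rt ri) := by
  intro S hS
  have glbS := StmtAux.glb_aux hem hκ hlogic hκary hleast S hS
  constructor
  · obtain ⟨rs, h1, h2, h3⟩ := StmtAux.glb_aux hem hκ hlogic hκary hleast
      {u | IsNatExt em r u ∧ ∀ r' ∈ S, RelLe r' u} (fun u hu => hu.1)
    exact ⟨rs, h1, fun r' hr' => h3 r' (hS r' hr') (fun u hu => hu.2 r' hr'),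
      fun rt hrt hub => h2 rt ⟨hrt, hub⟩⟩
  · exact glbS
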